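/- If the covariance matrix R_u is diagonal, then E[ū (u − ξ)ᵀ F] = −p σ_ξ² I_M. -/

import Mathlib

open MeasureTheory ProbabilityTheory Matrix
open scoped Matrix

/-- Index type for the mutually independent sources: the `M` indicator variables `fʲ`,
the regressor `u`, and the perturbation `ξ`. -/
inductive MissIdx (M : ℕ) where
  | F : Fin M → MissIdx M
  | U : MissIdx M
  | Xi : MissIdx M

/-- Codomain of each of the independent sources. -/
def MissIdx.type (M : ℕ) : MissIdx M → Type
  | .F _ => ℝ
  | .U => Fin M → ℝ
  | .Xi => Fin M → ℝ

instance (M : ℕ) (i : MissIdx M) : MeasurableSpace (MissIdx.type M i) :=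
  match i with
  | .F _ => (inferInstance : MeasurableSpace ℝ)
  | .U => (inferInstance : MeasurableSpace (Fin M → ℝ))
  | .Xi => (inferInstance : MeasurableSpace (Fin M → ℝ))

/-- The family of random variables indexed by `MissIdx`. -/
def missFun {Ω : Type*} (M : ℕ) (f : Fin M → Ω → ℝ) (u ξ : Ω → Fin M → ℝ) :
    (i : MissIdx M) → Ω → MissIdx.type M i
  | .F j => f j
  | .U => u
  | .Xi => ξ

/-- The censored regressor `ū = (I_M − F)u + Fξ`. -/
noncomputable def censReg {Ω : Type*} (M : ℕ) (f : Fin M → Ω → ℝ) (u ξ : Ω → Fin M → ℝ)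
    (ω : Ω) : Fin M → ℝ :=
  ((1 : Matrix (Fin M) (Fin M) ℝ) - Matrix.diagonal (fun k => f k ω)) *ᵥ u ω
    + (Matrix.diagonal (fun k => f k ω)) *ᵥ ξ ω

/-- The all-ones matrix `𝟙𝟙ᵀ`. -/
noncomputable def onesMat (M : ℕ) : Matrix (Fin M) (Fin M) ℝ := Matrix.of fun _ _ => (1 : ℝ)

/-- The matrix `P₁ = (2p−p²)𝟙𝟙ᵀ − (p−p²)I_M`. -/
noncomputable def Pone (M : ℕ) (p : ℝ) : Matrix (Fin M) (Fin M) ℝ :=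
  (2 * p - p ^ 2) • onesMat M - (p - p ^ 2) • (1 : Matrix (Fin M) (Fin M) ℝ)

/-- Product of two `L²` functions is integrable. -/
lemma l2_mul_integrable {Ω : Type*} [MeasurableSpace Ω] {μ : Measure Ω} {g h : Ω → ℝ}
    (hg : MemLp g 2 μ) (hh : MemLp h 2 μ) :
    Integrable (fun ω => g ω * h ω) μ := by
  have hsum : (1 : ENNReal) / 1 = 1 / 2 + 1 / 2 := by
    rw [ENNReal.add_halves, div_one]
  have := hh.smul (φ := g) (r := 1) hg
  rw [← memLp_one_iff_integrable]
  exact this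

/-- if `R_u` is diagonal then `E[ū (u − ξ)ᵀ F] = −p σ_ξ² I_M`
(expectation taken entrywise). -/
theorem cross_term_expectation_diagonal
    {Ω : Type*} [MeasurableSpace Ω] (μ : Measure Ω) [IsProbabilityMeasure μ]
    (M : ℕ) (p : ℝ) (hp0 : 0 ≤ p) (hp1 : p < 1) (σξ : ℝ) (hσξ : 0 ≤ σξ)
    (u ξ : Ω → Fin M → ℝ) (f : Fin M → Ω → ℝ)
    (humeas : Measurable u) (hξmeas : Measurable ξ) (hfmeas : ∀ j, Measurable (f j))
    (huL2 : ∀ i, MemLp (fun ω => u ω i) 2 μ) (hξL2 : ∀ i, MemLp (fun ω => ξ ω i) 2 μ)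
    (humean : ∀ i, ∫ ω, u ω i ∂μ = 0) (hξmean : ∀ i, ∫ ω, ξ ω i ∂μ = 0)
    (Ru : Matrix (Fin M) (Fin M) ℝ)
    (hRu : ∀ i j, Ru i j = ∫ ω, u ω i * u ω j ∂μ)
    (hRudiag : Ru.IsDiag)
    (hξcov : ∀ i j, ∫ ω, ξ ω i * ξ ω j ∂μ = if i = j then σξ ^ 2 else 0)
    (hf01 : ∀ j ω, f j ω = 0 ∨ f j ω = 1)
    (hfp : ∀ j, μ {ω | f j ω = 1} = ENNReal.ofReal p)
    (hindep : iIndepFun (missFun M f u ξ) μ) :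
    (Matrix.of fun i j =>
        ∫ ω, censReg M f u ξ ω i *
          ((u ω - ξ ω) ᵥ* Matrix.diagonal (fun k => f k ω)) j ∂μ)
      = (-(p * σξ ^ 2)) • (1 : Matrix (Fin M) (Fin M) ℝ) := by
  classical
  have hmeas : ∀ i, Measurable (missFun M f u ξ i) := by
    intro i
    cases i with
    | F j => exact hfmeas j
    | U => exact humeas
    | Xi => exact hξmeas
  have hfbd : ∀ j, ∀ ω, ‖f j ω‖ ≤ 1 := by
    intro j ω; rcases hf01 j ω with h | h <;> simp [h]
  have hEf : ∀ j, ∫ ω, f j ω ∂μ = p := by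
    intro j
    have hs : MeasurableSet {ω | f j ω = 1} := (hfmeas j) (measurableSet_singleton 1)
    have heq : (fun ω => f j ω) = Set.indicator {ω | f j ω = 1} (fun _ => (1 : ℝ)) := by
      funext ω
      rcases hf01 j ω with h | h <;>
        simp [Set.indicator_apply, Set.mem_setOf_eq, h]
    rw [heq, integral_indicator_const _ hs, measureReal_def, hfp j, smul_eq_mul, mul_one,
      ENNReal.toReal_ofReal hp0]
  have hUXi : IndepFun u ξ μ :=
    hindep.indepFun (i := MissIdx.U) (j := MissIdx.Xi) (by intro h; cases h)
  have hpair : ∀ k, IndepFun (fun ω => (u ω, ξ ω)) (f k) μ := fun k =>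
    hindep.indepFun_prodMk hmeas MissIdx.U MissIdx.Xi (MissIdx.F k)
      (by intro h; cases h) (by intro h; cases h)
  have hIuu : ∀ i j, Integrable (fun ω => u ω i * u ω j) μ := fun i j =>
    l2_mul_integrable (huL2 i) (huL2 j)
  have hIuξ : ∀ i j, Integrable (fun ω => u ω i * ξ ω j) μ := fun i j =>
    l2_mul_integrable (huL2 i) (hξL2 j)
  have hIξu : ∀ i j, Integrable (fun ω => ξ ω i * u ω j) μ := fun i j =>
    l2_mul_integrable (hξL2 i) (huL2 j)
  have hIξξ : ∀ i j, Integrable (fun ω => ξ ω i * ξ ω j) μ := fun i j =>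
    l2_mul_integrable (hξL2 i) (hξL2 j)
  have hEuξ : ∀ i j, ∫ ω, u ω i * ξ ω j ∂μ = 0 := by
    intro i j
    have h : IndepFun (fun ω => u ω i) (fun ω => ξ ω j) μ :=
      hUXi.comp (measurable_pi_apply i) (measurable_pi_apply j)
    rw [h.integral_fun_mul_eq_mul_integral ((huL2 i).1) ((hξL2 j).1), humean i, zero_mul]
  have hEξu : ∀ i j, ∫ ω, ξ ω i * u ω j ∂μ = 0 := by
    intro i j
    have h : IndepFun (fun ω => ξ ω i) (fun ω => u ω j) μ :=
      hUXi.symm.comp (measurable_pi_apply i) (measurable_pi_apply j)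
    rw [h.integral_fun_mul_eq_mul_integral ((hξL2 i).1) ((huL2 j).1), hξmean i, zero_mul]
  ext i j
  simp only [Matrix.of_apply, Matrix.smul_apply, Matrix.one_apply, smul_eq_mul]
  have hpt : ∀ ω, censReg M f u ξ ω i * ((u ω - ξ ω) ᵥ* Matrix.diagonal fun k => f k ω) j
      = f j ω * (u ω i * (u ω j - ξ ω j))
        + (f i ω * f j ω) * ((ξ ω i - u ω i) * (u ω j - ξ ω j)) := by
    intro ω
    simp only [censReg, Matrix.sub_mulVec, Matrix.one_mulVec, Matrix.mulVec_diagonal,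
      Matrix.vecMul_diagonal, Pi.add_apply, Pi.sub_apply]
    ring
  rw [integral_congr_ae (Filter.Eventually.of_forall hpt)]
  have hK : ∀ i j : Fin M, Integrable (fun ω => (ξ ω i - u ω i) * (u ω j - ξ ω j)) μ :=
    fun i j => l2_mul_integrable ((hξL2 i).sub (huL2 i)) ((huL2 j).sub (hξL2 j))
  have hH : Integrable (fun ω => u ω i * (u ω j - ξ ω j)) μ :=
    l2_mul_integrable (huL2 i) ((huL2 j).sub (hξL2 j))
  have hA : Integrable (fun ω => f j ω * (u ω i * (u ω j - ξ ω j))) μ :=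
    hH.bdd_mul (c := 1) ((hfmeas j).aestronglyMeasurable) (Filter.Eventually.of_forall (hfbd j))
  have hfmulmeas : Measurable (fun ω => f i ω * f j ω) := (hfmeas i).mul (hfmeas j)
  have hB : Integrable (fun ω => (f i ω * f j ω) * ((ξ ω i - u ω i) * (u ω j - ξ ω j))) μ := by
    refine (hK i j).bdd_mul (c := 1) hfmulmeas.aestronglyMeasurable (Filter.Eventually.of_forall fun ω => ?_)
    calc ‖f i ω * f j ω‖ = ‖f i ω‖ * ‖f j ω‖ := norm_mul _ _
      _ ≤ 1 * 1 := mul_le_mul (hfbd i ω) (hfbd j ω) (norm_nonneg _) zero_le_one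
      _ = 1 := one_mul 1
  rw [integral_add hA hB]
  have hEH : ∫ ω, u ω i * (u ω j - ξ ω j) ∂μ = Ru i j := by
    have h : (fun ω => u ω i * (u ω j - ξ ω j))
        = fun ω => u ω i * u ω j - u ω i * ξ ω j := by funext ω; ring
    rw [h, integral_sub (hIuu i j) (hIuξ i j), hEuξ i j, ← hRu i j, sub_zero]
  have hEA : ∫ ω, f j ω * (u ω i * (u ω j - ξ ω j)) ∂μ = p * Ru i j := by
    have hind : IndepFun (f j) (fun ω => u ω i * (u ω j - ξ ω j)) μ :=
      (hpair j).symm.comp measurable_id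
        (show Measurable (fun q : (Fin M → ℝ) × (Fin M → ℝ) => q.1 i * (q.1 j - q.2 j)) by
          fun_prop)
    rw [hind.integral_fun_mul_eq_mul_integral (hfmeas j).aestronglyMeasurable hH.1, hEf j, hEH]
  have hEK : ∀ i j : Fin M, ∫ ω, (ξ ω i - u ω i) * (u ω j - ξ ω j) ∂μ
      = -(if i = j then σξ ^ 2 else 0) - Ru i j := by
    intro i j
    have h : (fun ω => (ξ ω i - u ω i) * (u ω j - ξ ω j))
        = fun ω => (ξ ω i * u ω j - ξ ω i * ξ ω j) - (u ω i * u ω j - u ω i * ξ ω j) := by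
      funext ω; ring
    have h1 : Integrable (fun ω => ξ ω i * u ω j - ξ ω i * ξ ω j) μ :=
      (hIξu i j).sub (hIξξ i j)
    have h2 : Integrable (fun ω => u ω i * u ω j - u ω i * ξ ω j) μ :=
      (hIuu i j).sub (hIuξ i j)
    rw [h, integral_sub h1 h2,
      integral_sub (hIξu i j) (hIξξ i j), integral_sub (hIuu i j) (hIuξ i j),
      hEξu i j, hξcov i j, hEuξ i j, ← hRu i j]
    ring
  have hEB : ∫ ω, (f i ω * f j ω) * ((ξ ω i - u ω i) * (u ω j - ξ ω j)) ∂μ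
      = (if i = j then -(p * σξ ^ 2) - p * Ru i i else 0) := by
    by_cases hij : i = j
    · subst hij
      have hind : IndepFun (fun ω => f i ω * f i ω)
          (fun ω => (ξ ω i - u ω i) * (u ω i - ξ ω i)) μ :=
        (hpair i).symm.comp (show Measurable (fun x : ℝ => x * x) by fun_prop)
          (show Measurable
              (fun q : (Fin M → ℝ) × (Fin M → ℝ) => (q.2 i - q.1 i) * (q.1 i - q.2 i)) by
            fun_prop)
      have hff : (fun ω => f i ω * f i ω) = fun ω => f i ω := by
        funext ω; rcases hf01 i ω with h | h <;> simp [h]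
      rw [hind.integral_fun_mul_eq_mul_integral hfmulmeas.aestronglyMeasurable (hK i i).1, hff, hEf i, hEK i i]
      simp only [if_true, if_pos rfl]
      ring
    · have hind : IndepFun (fun ω => (f i ω, f j ω)) (fun ω => (u ω, ξ ω)) μ :=
        hindep.indepFun_prodMk_prodMk hmeas (MissIdx.F i) (MissIdx.F j) MissIdx.U MissIdx.Xi
          (by intro h; cases h) (by intro h; cases h)
          (by intro h; cases h) (by intro h; cases h)
      have hind2 : IndepFun (fun ω => f i ω * f j ω)
          (fun ω => (ξ ω i - u ω i) * (u ω j - ξ ω j)) μ :=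
        hind.comp (show Measurable (fun q : ℝ × ℝ => q.1 * q.2) by fun_prop)
          (show Measurable
              (fun q : (Fin M → ℝ) × (Fin M → ℝ) => (q.2 i - q.1 i) * (q.1 j - q.2 j)) by
            fun_prop)
      rw [hind2.integral_fun_mul_eq_mul_integral hfmulmeas.aestronglyMeasurable (hK i j).1, hEK i j,
        hRudiag hij]
      simp [hij]
  rw [hEA, hEB]
  by_cases hij : i = j
  · subst hij
    simp only [if_true, if_pos rfl]
    ring
  · rw [hRudiag hij]
    simp [hij]
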